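/- arXiv:2101.10962 — 3 statements merged into one kernel-verified Lean document; each statement's English description precedes it below -/
import Mathlib

section
/- In the non-stationary AR(1) model with sub-Gaussian noise, assume |fᵢ| ≤ C₁√(log T) for all i, let k ∈ (0,1) and let the penalty parameter λ > 0 satisfy k·λ = (2√2·A₃·σ₀²·(c₁+1)/(1−α₁))·log(2T)·√(log(2T)/T) and k·λ ≥ 2A₂σ₀·log(2T)/√T. Let β̂_T minimize the penalized objective (1/(2T))‖x_{1:T} − Xβ'‖₂² + λ‖Δ'‖₁ over β' ∈ ℝ^{T+1} and set e = β̂_T − β. Then on the event 𝒜 = 𝒜₁ ∩ 𝒜₂ ∩ 𝒜₃, ‖e_{I₃}‖₁ ≤ min{((1+k)/(1−k))·‖e_{I₂}‖₁, 2s·δ₀/(1−k)} + (k/(1−k))·‖e_{I₁}‖₁. -/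
open MeasureTheory ProbabilityTheory Finset Matrix

/-- The AR(1) recursion `xᵢ = fᵢ + α·x_{i−1} + εᵢ` with initial value `x₀`. -/
noncomputable def arSeq (x₀ α : ℝ) (f e : ℕ → ℝ) : ℕ → ℝ
  | 0 => x₀
  | i + 1 => f (i + 1) + α * arSeq x₀ α f e i + e (i + 1)

/-- The coefficient vector `β = (α₁, μ, Δ₂,…,Δ_T)ᵀ ∈ ℝ^{T+1}`. -/
noncomputable def betaVec (α : ℝ) (f : ℕ → ℝ) (T : ℕ) : Fin (T + 1) → ℝ := fun j =>
  if (j : ℕ) = 0 then α else if (j : ℕ) = 1 then f 1 else f (j : ℕ) - f ((j : ℕ) - 1)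

/-- The design matrix `X = (x_{0:T−1}, L) ∈ ℝ^{T×(T+1)}`. -/
noncomputable def designX (T : ℕ) (x : ℕ → ℝ) : Matrix (Fin T) (Fin (T + 1)) ℝ :=
  Matrix.of fun i j =>
    if (j : ℕ) = 0 then x (i : ℕ) else if (j : ℕ) ≤ (i : ℕ) + 1 then 1 else 0

/-- `ℓ₁` norm of the `Δ`-part (coordinates `2,…,T+1`) of a vector in `ℝ^{T+1}`. -/
noncomputable def l1Delta {T : ℕ} (b : Fin (T + 1) → ℝ) : ℝ :=
  ∑ j ∈ Finset.univ.filter (fun j : Fin (T + 1) => 2 ≤ (j : ℕ)), |b j|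

/-- The penalized least-squares objective `(1/(2T))‖x_{1:T} − Xb‖₂² + λ‖Δ'‖₁`. -/
noncomputable def penObj (T : ℕ) (x : ℕ → ℝ) (lam : ℝ) (b : Fin (T + 1) → ℝ) : ℝ :=
  (1 / (2 * (T : ℝ))) * ∑ i : Fin T, (x ((i : ℕ) + 1) - (designX T x).mulVec b i) ^ 2
    + lam * l1Delta b

/-- `ℓ₁` norm of a vector restricted to an index set `I` (`v_I` is `v` on `I`, zero off `I`). -/
noncomputable def l1On {n : ℕ} (I : Finset (Fin n)) (v : Fin n → ℝ) : ℝ := ∑ j ∈ I, |v j|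

/-- Event `𝒜₁`. -/
def eventA1 {Ω : Type*} (T : ℕ) (ε : ℕ → Ω → ℝ) (bd : ℝ) : Set Ω :=
  {ω | ∀ i ∈ Finset.Icc 1 T, |ε i ω| ≤ bd}

/-- Event `𝒜₂`. -/
def eventA2 {Ω : Type*} (T : ℕ) (ε : ℕ → Ω → ℝ) (bd : ℝ) : Set Ω :=
  {ω | ∀ j ∈ Finset.Icc 1 T, |∑ i ∈ Finset.Icc j T, ε i ω| ≤ bd}

/-- Event `𝒜₃`. -/
def eventA3 {Ω : Type*} (T : ℕ) (ε : ℕ → Ω → ℝ) (x : Ω → ℕ → ℝ) (bd : ℝ) : Set Ω :=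
  {ω | |∑ i ∈ Finset.Icc 1 T, ε i ω * x ω (i - 1)| ≤ bd}

/- ### Auxiliary lemmas -/

lemma shiftSum (g : ℕ → ℝ) : ∀ T : ℕ, ∑ i ∈ Finset.range T, g (i + 1) = ∑ m ∈ Finset.Icc 1 T, g m := by
  intro T
  induction T with
  | zero => simp
  | succ n ih => rw [Finset.sum_range_succ, ih, Finset.sum_Icc_succ_top (by omega)]

lemma telescope_beta (f : ℕ → ℝ) (n : ℕ) (hn : 1 ≤ n) :
    ∑ j ∈ Finset.range n, (if j + 1 = 1 then f 1 else f (j + 1) - f j) = f n := by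
  induction n with
  | zero => omega
  | succ m ih =>
    rw [Finset.sum_range_succ]
    rcases Nat.eq_zero_or_pos m with h | h
    · subst h; simp
    · rw [ih h, if_neg (by omega)]; ring

lemma mulVec_beta (T : ℕ) (α : ℝ) (f : ℕ → ℝ) (x : ℕ → ℝ) (i : Fin T) :
    (designX T x).mulVec (betaVec α f T) i = x i * α + f ((i : ℕ) + 1) := by
  unfold Matrix.mulVec dotProduct designX betaVec
  rw [Fin.sum_univ_succ]
  simp only [Matrix.of_apply, Fin.val_zero, Fin.val_succ, if_pos rfl, Nat.succ_ne_zero,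
    if_false, Nat.add_sub_cancel, Nat.add_eq_zero, and_false, ite_false]
  congr 1
  have h1 : ∀ j : Fin T, (if (j:ℕ) + 1 ≤ (i:ℕ) + 1 then (1:ℝ) else 0) *
      (if (j:ℕ) + 1 = 1 then f 1 else f ((j:ℕ) + 1) - f (j:ℕ))
      = (fun n : ℕ => if n + 1 ≤ (i:ℕ) + 1 then (if n + 1 = 1 then f 1 else f (n + 1) - f n) else 0) (j:ℕ) := by
    intro j; by_cases h : (j:ℕ) + 1 ≤ (i:ℕ) + 1 <;> simp [h]
  rw [Finset.sum_congr rfl (fun j _ => h1 j),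
    Fin.sum_univ_eq_sum_range (fun n : ℕ => if n + 1 ≤ (i:ℕ) + 1 then (if n + 1 = 1 then f 1 else f (n + 1) - f n) else 0) T,
    ← Finset.sum_filter]
  have h2 : (Finset.range T).filter (fun n => n + 1 ≤ (i:ℕ) + 1) = Finset.range ((i:ℕ) + 1) := by
    ext n; simp only [Finset.mem_filter, Finset.mem_range]; omega
  rw [h2, telescope_beta f _ (by omega)]

/-- Column 0 of the design matrix against the noise. -/
lemma col_zero (T : ℕ) (g x : ℕ → ℝ) :
    ∑ i : Fin T, g ((i : ℕ) + 1) * x (i : ℕ) = ∑ m ∈ Finset.Icc 1 T, g m * x (m - 1) := by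
  rw [Fin.sum_univ_eq_sum_range (fun n => g (n + 1) * x n) T,
    ← shiftSum (fun m => g m * x (m - 1)) T]
  exact Finset.sum_congr rfl fun n _ => by simp

/-- Later columns of the design matrix against the noise. -/
lemma col_succ (T : ℕ) (g : ℕ → ℝ) (j : Fin T) :
    ∑ i : Fin T, g ((i : ℕ) + 1) * (if (j : ℕ) + 1 ≤ (i : ℕ) + 1 then (1:ℝ) else 0)
      = ∑ m ∈ Finset.Icc ((j : ℕ) + 1) T, g m := by
  have h1 : ∀ i : Fin T, g ((i : ℕ) + 1) * (if (j : ℕ) + 1 ≤ (i : ℕ) + 1 then (1:ℝ) else 0)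
      = (fun n : ℕ => if (j : ℕ) + 1 ≤ n + 1 then g (n + 1) else 0) (i : ℕ) := by
    intro i; by_cases h : (j:ℕ) + 1 ≤ (i:ℕ) + 1 <;> simp [h]
  rw [Finset.sum_congr rfl (fun i _ => h1 i),
    Fin.sum_univ_eq_sum_range (fun n : ℕ => if (j : ℕ) + 1 ≤ n + 1 then g (n + 1) else 0) T,
    shiftSum (fun m => if (j:ℕ) + 1 ≤ m then g m else 0) T, ← Finset.sum_filter]
  congr 1
  ext m; simp only [Finset.mem_filter, Finset.mem_Icc]; omega

set_option maxHeartbeats 2000000 in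
/-- **Lemma 2: restricted `ℓ₁` estimation error.** On the event
`𝒜 = 𝒜₁ ∩ 𝒜₂ ∩ 𝒜₃`, the estimation error `e = β̂_T − β` of the penalized estimator
satisfies `‖e_{I₃}‖₁ ≤ min{((1+k)/(1−k))‖e_{I₂}‖₁, 2sδ₀/(1−k)} + (k/(1−k))‖e_{I₁}‖₁`. -/
theorem stmt_8 {Ωs : Type*} [MeasurableSpace Ωs] (P : Measure Ωs) [IsProbabilityMeasure P]
    (T : ℕ) (hT : 2 ≤ T) (σ₀ : ℝ) (hσ₀ : 0 < σ₀) (ε : ℕ → Ωs → ℝ)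
    (hmeas : ∀ i, Measurable (ε i))
    (hindep : iIndepFun ε P)
    (hident : ∀ i, P.map (ε i) = P.map (ε 1))
    (hmean : ∀ i, ∫ ω, ε i ω ∂P = 0)
    (hsubG : ∀ i, ∀ l : ℝ, ∫ ω, Real.exp (l * ε i ω) ∂P ≤ Real.exp (l ^ 2 * σ₀ ^ 2 / 2))
    (x₀ α₁ : ℝ) (hα₁ : 0 < α₁) (hα₁' : α₁ < 1) (f : ℕ → ℝ)
    (A₁ A₂ A₃ C₁ c₁ : ℝ) (hA₁ : 1 < A₁) (hA₂ : Real.sqrt A₁ < A₂) (hA₃ : 0 < A₃)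
    (hC₁ : 0 < C₁) (hc₁ : 0 < c₁)
    (hf : ∀ i ∈ Finset.Icc 1 T, |f i| ≤ C₁ * Real.sqrt (Real.log T))
    (hfc : ∀ i ∈ Finset.Icc 1 T,
      |f i| ≤ c₁ * Real.sqrt (2 * A₁ * σ₀ ^ 2 * Real.log (2 * T)))
    (s : ℕ) (δ₀ : ℝ) (hδ₀ : 0 ≤ δ₀)
    (hs : ∃ S : Finset (Fin (T + 1)), S.card ≤ s ∧ ∀ j ∉ S, betaVec α₁ f T j = 0)
    (hΔ : ∀ j : Fin (T + 1), 2 ≤ (j : ℕ) → |betaVec α₁ f T j| ≤ δ₀)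
    (k lam : ℝ) (hk : 0 < k) (hk' : k < 1) (hlam : 0 < lam)
    (hklam : k * lam = 2 * Real.sqrt 2 * A₃ * σ₀ ^ 2 * (c₁ + 1) / (1 - α₁) *
      Real.log (2 * T) * Real.sqrt (Real.log (2 * T) / T))
    (hklam2 : 2 * A₂ * σ₀ * Real.log (2 * T) / Real.sqrt T ≤ k * lam)
    (βhat : Ωs → Fin (T + 1) → ℝ)
    (hmin : ∀ ω, ∀ b : Fin (T + 1) → ℝ,
      penObj T (arSeq x₀ α₁ f (fun n => ε n ω)) lam (βhat ω) ≤
        penObj T (arSeq x₀ α₁ f (fun n => ε n ω)) lam b) :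
    ∀ ω ∈ eventA1 T ε (Real.sqrt (2 * A₁ * σ₀ ^ 2 * Real.log (2 * T)))
        ∩ eventA2 T ε (2 * A₂ * σ₀ * Real.sqrt T * Real.log (2 * T))
        ∩ eventA3 T ε (fun ω => arSeq x₀ α₁ f (fun n => ε n ω))
            (2 * Real.sqrt 2 * A₃ * σ₀ ^ 2 * (c₁ + 1) * Real.log (2 * T) *
              Real.sqrt (T * Real.log (2 * T)) / (1 - α₁)),
      l1On (Finset.univ.filter fun j : Fin (T + 1) =>
            2 ≤ (j : ℕ) ∧ betaVec α₁ f T j = 0)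
          (βhat ω - betaVec α₁ f T) ≤
        min (((1 + k) / (1 - k)) *
              l1On (Finset.univ.filter fun j : Fin (T + 1) =>
                  2 ≤ (j : ℕ) ∧ betaVec α₁ f T j ≠ 0)
                (βhat ω - betaVec α₁ f T))
            (2 * (s : ℝ) * δ₀ / (1 - k))
          + (k / (1 - k)) * l1On {0, 1} (βhat ω - betaVec α₁ f T) := by
  intro ω hω
  obtain ⟨⟨h1, h2⟩, h3⟩ := hω
  set xs : ℕ → ℝ := arSeq x₀ α₁ f (fun n => ε n ω) with hxs
  set β : Fin (T + 1) → ℝ := betaVec α₁ f T with hβdef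
  set bh : Fin (T + 1) → ℝ := βhat ω with hbhdef
  set e : Fin (T + 1) → ℝ := bh - β with hedef
  have heapp : ∀ j, e j = bh j - β j := fun j => rfl
  have hTpos : (0:ℝ) < T := by exact_mod_cast Nat.lt_of_lt_of_le (by norm_num) hT
  have hlog : (0:ℝ) < Real.log (2 * T) := by
    apply Real.log_pos
    have : (2:ℝ) ≤ (T:ℝ) := by exact_mod_cast hT
    nlinarith
  have hsT : (0:ℝ) < Real.sqrt T := Real.sqrt_pos.2 hTpos
  have hTT : Real.sqrt T * Real.sqrt T = T := Real.mul_self_sqrt hTpos.le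
  -- the residual model equation
  set u : Fin T → ℝ := (designX T xs).mulVec e with hudef
  have hres : ∀ i : Fin T, xs ((i : ℕ) + 1) - (designX T xs).mulVec β i = ε ((i : ℕ) + 1) ω := by
    intro i
    rw [hβdef, mulVec_beta]
    show f ((i:ℕ) + 1) + α₁ * xs (i:ℕ) + ε ((i:ℕ)+1) ω - _ = _
    ring
  have hbh_eq : bh = β + e := by ext j; simp [heapp]
  have hres2 : ∀ i : Fin T, xs ((i : ℕ) + 1) - (designX T xs).mulVec bh i
      = ε ((i : ℕ) + 1) ω - u i := by
    intro i
    rw [hbh_eq, Matrix.mulVec_add]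
    show xs (↑i + 1) - ((designX T xs *ᵥ β) i + (designX T xs *ᵥ e) i) = _
    rw [← hres i]
    ring
  -- basic inequality
  set B : ℝ := ∑ i : Fin T, ε ((i : ℕ) + 1) ω * u i with hBdef
  have key : lam * l1Delta bh - lam * l1Delta β ≤ (1 / (T:ℝ)) * B := by
    have hpen := hmin ω β
    unfold penObj at hpen
    rw [← hxs, ← hbhdef] at hpen
    have hsplit : ∑ i : Fin T, (xs ((i : ℕ) + 1) - (designX T xs).mulVec bh i) ^ 2
        = (∑ i : Fin T, (ε ((i : ℕ) + 1) ω) ^ 2) - 2 * B + ∑ i : Fin T, (u i) ^ 2 := by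
      have hterm : ∀ i : Fin T, (xs ((i : ℕ) + 1) - (designX T xs).mulVec bh i) ^ 2
          = (ε ((i : ℕ) + 1) ω) ^ 2 - 2 * (ε ((i : ℕ) + 1) ω * u i) + (u i) ^ 2 :=
        fun i => by rw [hres2 i]; ring
      rw [Finset.sum_congr rfl fun i _ => hterm i, Finset.sum_add_distrib,
        Finset.sum_sub_distrib, ← Finset.mul_sum]
    have hsplit2 : ∑ i : Fin T, (xs ((i : ℕ) + 1) - (designX T xs).mulVec β i) ^ 2
        = ∑ i : Fin T, (ε ((i : ℕ) + 1) ω) ^ 2 :=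
      Finset.sum_congr rfl fun i _ => by rw [hres i]
    rw [hsplit, hsplit2] at hpen
    have hu2 : (0:ℝ) ≤ ∑ i : Fin T, (u i) ^ 2 := Finset.sum_nonneg fun i _ => sq_nonneg _
    have h2T : (0:ℝ) < 2 * T := by linarith
    have heq : (1 / (2 * (T:ℝ))) * (2 * B) = (1 / (T:ℝ)) * B := by field_simp
    nlinarith [mul_le_mul_of_nonneg_left hu2 (le_of_lt (by positivity : (0:ℝ) < 1 / (2 * (T:ℝ))))]
  -- bounding B via column sums
  have hswap : B = ∑ j : Fin (T + 1), (∑ i : Fin T, ε ((i:ℕ) + 1) ω * designX T xs i j) * e j := by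
    rw [hBdef]
    simp only [hudef, Matrix.mulVec, dotProduct, Finset.mul_sum]
    rw [Finset.sum_comm]
    exact Finset.sum_congr rfl fun j _ => by rw [Finset.sum_mul]; exact Finset.sum_congr rfl fun i _ => by ring
  -- bound on each column sum
  have hc0 : |∑ i : Fin T, ε ((i:ℕ) + 1) ω * designX T xs i 0|
      ≤ 2 * Real.sqrt 2 * A₃ * σ₀ ^ 2 * (c₁ + 1) * Real.log (2 * T) *
          Real.sqrt (T * Real.log (2 * T)) / (1 - α₁) := by
    have : ∀ i : Fin T, ε ((i:ℕ) + 1) ω * designX T xs i 0 = ε ((i:ℕ)+1) ω * xs (i:ℕ) := by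
      intro i; simp [designX]
    rw [Finset.sum_congr rfl fun i _ => this i, col_zero T (fun m => ε m ω) xs]
    exact h3
  have hcj : ∀ j : Fin T, |∑ i : Fin T, ε ((i:ℕ) + 1) ω * designX T xs i j.succ|
      ≤ 2 * A₂ * σ₀ * Real.sqrt T * Real.log (2 * T) := by
    intro j
    have : ∀ i : Fin T, ε ((i:ℕ) + 1) ω * designX T xs i j.succ
        = ε ((i:ℕ)+1) ω * (if (j:ℕ) + 1 ≤ (i:ℕ) + 1 then (1:ℝ) else 0) := by
      intro i; simp [designX, Fin.val_succ]
    rw [Finset.sum_congr rfl fun i _ => this i, col_succ T (fun m => ε m ω) j]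
    exact h2 ((j:ℕ) + 1) (by simp [Finset.mem_Icc])
  -- the bound constants
  have hbd3 : 2 * Real.sqrt 2 * A₃ * σ₀ ^ 2 * (c₁ + 1) * Real.log (2 * T) *
      Real.sqrt (T * Real.log (2 * T)) / (1 - α₁) = k * lam * T := by
    have hkey : Real.sqrt (Real.log (2 * T)) / Real.sqrt T * (T:ℝ)
        = Real.sqrt T * Real.sqrt (Real.log (2 * T)) := by
      rw [div_mul_eq_mul_div, div_eq_iff hsT.ne']
      linear_combination (-Real.sqrt (Real.log (2 * (T:ℝ)))) * hTT
    rw [hklam, Real.sqrt_div hlog.le, Real.sqrt_mul hTpos.le]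
    linear_combination (-(2 * Real.sqrt 2 * A₃ * σ₀ ^ 2 * (c₁ + 1) / (1 - α₁) *
      Real.log (2 * (T:ℝ)))) * hkey
  have hbd2 : 2 * A₂ * σ₀ * Real.sqrt T * Real.log (2 * T) ≤ k * lam * T := by
    have h' := mul_le_mul_of_nonneg_right hklam2 hTpos.le
    have : 2 * A₂ * σ₀ * Real.log (2 * T) / Real.sqrt T * (T:ℝ)
        = 2 * A₂ * σ₀ * Real.sqrt T * Real.log (2 * T) := by
      rw [div_mul_eq_mul_div, div_eq_iff hsT.ne']
      linear_combination (-(2 * A₂ * σ₀ * Real.log (2 * (T:ℝ)))) * hTT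
    linarith [this ▸ h']
  have hklamnn : 0 ≤ k * lam := le_of_lt (mul_pos hk hlam)
  -- combine: (1/T) * B ≤ k lam * total ℓ¹ norm of e
  have htot : (1 / (T:ℝ)) * B ≤ k * lam * ∑ j : Fin (T + 1), |e j| := by
    have habs : |B| ≤ ∑ j : Fin (T + 1), |∑ i : Fin T, ε ((i:ℕ) + 1) ω * designX T xs i j| * |e j| := by
      rw [hswap]
      refine le_trans (Finset.abs_sum_le_sum_abs _ _) ?_
      exact le_of_eq (Finset.sum_congr rfl fun j _ => abs_mul _ _)
    have hsum1 : ∑ j : Fin (T + 1), |∑ i : Fin T, ε ((i:ℕ) + 1) ω * designX T xs i j| * |e j|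
        ≤ k * lam * T * ∑ j : Fin (T + 1), |e j| := by
      have hterm0 : |∑ i : Fin T, ε ((i:ℕ) + 1) ω * designX T xs i 0| * |e 0|
          ≤ k * lam * T * |e 0| :=
        mul_le_mul_of_nonneg_right (hbd3 ▸ hc0) (abs_nonneg _)
      have htermj : ∀ j : Fin T,
          |∑ i : Fin T, ε ((i:ℕ) + 1) ω * designX T xs i j.succ| * |e j.succ|
          ≤ k * lam * T * |e j.succ| := fun j =>
        mul_le_mul_of_nonneg_right (le_trans (hcj j) hbd2) (abs_nonneg _)
      rw [Fin.sum_univ_succ, Fin.sum_univ_succ (fun j : Fin (T + 1) => |e j|), mul_add]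
      refine add_le_add hterm0 ?_
      rw [Finset.mul_sum]
      exact Finset.sum_le_sum fun j _ => htermj j
    have hBabs : B ≤ |B| := le_abs_self B
    have : (1 / (T:ℝ)) * B ≤ (1 / (T:ℝ)) * (k * lam * T * ∑ j : Fin (T + 1), |e j|) := by
      apply mul_le_mul_of_nonneg_left _ (by positivity)
      linarith
    refine le_trans this (le_of_eq ?_)
    field_simp
  -- index sets
  set E₁ : ℝ := l1On ({0, 1} : Finset (Fin (T + 1))) e with hE1def
  set E₂ : ℝ := l1On (Finset.univ.filter fun j : Fin (T + 1) => 2 ≤ (j : ℕ) ∧ β j ≠ 0) e with hE2def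
  set E₃ : ℝ := l1On (Finset.univ.filter fun j : Fin (T + 1) => 2 ≤ (j : ℕ) ∧ β j = 0) e with hE3def
  have hfilter01 : Finset.univ.filter (fun j : Fin (T + 1) => ¬ 2 ≤ (j : ℕ))
      = ({0, 1} : Finset (Fin (T + 1))) := by
    have hone : ((1 : Fin (T + 1)) : ℕ) = 1 := by
      rw [Fin.val_one']; exact Nat.mod_eq_of_lt (by omega)
    ext j
    simp only [Finset.mem_filter, Finset.mem_univ, true_and, Finset.mem_insert,
      Finset.mem_singleton, Fin.ext_iff, Fin.val_zero, hone, not_le]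
    omega
  have hsplit3 : ∀ v : Fin (T + 1) → ℝ,
      ∑ j ∈ Finset.univ.filter (fun j : Fin (T + 1) => 2 ≤ (j : ℕ)), |v j|
      = ∑ j ∈ Finset.univ.filter (fun j : Fin (T + 1) => 2 ≤ (j : ℕ) ∧ β j ≠ 0), |v j|
        + ∑ j ∈ Finset.univ.filter (fun j : Fin (T + 1) => 2 ≤ (j : ℕ) ∧ β j = 0), |v j| := by
    intro v
    rw [← Finset.sum_filter_add_sum_filter_not
      (Finset.univ.filter (fun j : Fin (T + 1) => 2 ≤ (j : ℕ))) (fun j => β j ≠ 0) (fun j => |v j|),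
      Finset.filter_filter, Finset.filter_filter]
    congr 2
    ext j
    simp [not_not]
  have hsumsplit : ∑ j : Fin (T + 1), |e j| = E₁ + E₂ + E₃ := by
    rw [← Finset.sum_filter_add_sum_filter_not Finset.univ
      (fun j : Fin (T + 1) => 2 ≤ (j : ℕ)) (fun j => |e j|), hfilter01, hsplit3 e]
    rw [hE1def, hE2def, hE3def]
    unfold l1On
    ring
  -- lower bounds for the penalty difference
  have hLbh : l1Delta bh = (∑ j ∈ Finset.univ.filter
        (fun j : Fin (T + 1) => 2 ≤ (j : ℕ) ∧ β j ≠ 0), |bh j|) + E₃ := by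
    unfold l1Delta
    rw [hsplit3 bh]
    congr 1
    rw [hE3def]; unfold l1On
    refine Finset.sum_congr rfl fun j hj => ?_
    simp only [Finset.mem_filter] at hj
    rw [heapp, hj.2.2, sub_zero]
  have hLβ : l1Delta β = ∑ j ∈ Finset.univ.filter
      (fun j : Fin (T + 1) => 2 ≤ (j : ℕ) ∧ β j ≠ 0), |β j| := by
    unfold l1Delta
    rw [hsplit3 β]
    have : ∑ j ∈ Finset.univ.filter (fun j : Fin (T + 1) => 2 ≤ (j : ℕ) ∧ β j = 0), |β j| = 0 := by
      refine Finset.sum_eq_zero fun j hj => ?_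
      simp only [Finset.mem_filter] at hj
      rw [hj.2.2, abs_zero]
    rw [this, add_zero]
  have hb1 : E₃ - E₂ ≤ l1Delta bh - l1Delta β := by
    rw [hLbh, hLβ, hE2def]
    unfold l1On
    have : ∑ j ∈ Finset.univ.filter (fun j : Fin (T + 1) => 2 ≤ (j : ℕ) ∧ β j ≠ 0), |β j|
        ≤ ∑ j ∈ Finset.univ.filter (fun j : Fin (T + 1) => 2 ≤ (j : ℕ) ∧ β j ≠ 0), (|bh j| + |e j|) := by
      refine Finset.sum_le_sum fun j _ => ?_
      calc |β j| = |bh j - e j| := by rw [heapp]; ring_nf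
        _ ≤ |bh j| + |e j| := abs_sub _ _
    rw [Finset.sum_add_distrib] at this
    linarith
  have hSβ : ∑ j ∈ Finset.univ.filter
      (fun j : Fin (T + 1) => 2 ≤ (j : ℕ) ∧ β j ≠ 0), |β j| ≤ (s:ℝ) * δ₀ := by
    obtain ⟨S, hScard, hS0⟩ := hs
    have hsub : Finset.univ.filter (fun j : Fin (T + 1) => 2 ≤ (j : ℕ) ∧ β j ≠ 0) ⊆ S := by
      intro j hj
      simp only [Finset.mem_filter] at hj
      by_contra hjS
      exact hj.2.2 (hS0 j hjS)
    calc ∑ j ∈ Finset.univ.filter (fun j : Fin (T + 1) => 2 ≤ (j : ℕ) ∧ β j ≠ 0), |β j|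
        ≤ (Finset.univ.filter (fun j : Fin (T + 1) => 2 ≤ (j : ℕ) ∧ β j ≠ 0)).card • δ₀ := by
          refine Finset.sum_le_card_nsmul _ _ _ fun j hj => ?_
          simp only [Finset.mem_filter] at hj
          exact hΔ j hj.2.1
      _ ≤ (s:ℝ) * δ₀ := by
          rw [nsmul_eq_mul]
          apply mul_le_mul_of_nonneg_right _ hδ₀
          exact_mod_cast le_trans (Finset.card_le_card hsub) hScard
  have hb2 : E₂ + E₃ - 2 * (s:ℝ) * δ₀ ≤ l1Delta bh - l1Delta β := by
    rw [hLbh, hLβ, hE2def]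
    unfold l1On
    have : ∑ j ∈ Finset.univ.filter (fun j : Fin (T + 1) => 2 ≤ (j : ℕ) ∧ β j ≠ 0), |e j|
        ≤ ∑ j ∈ Finset.univ.filter (fun j : Fin (T + 1) => 2 ≤ (j : ℕ) ∧ β j ≠ 0), (|bh j| + |β j|) := by
      refine Finset.sum_le_sum fun j _ => ?_
      calc |e j| = |bh j - β j| := by rw [heapp]
        _ ≤ |bh j| + |β j| := abs_sub _ _
    rw [Finset.sum_add_distrib] at this
    linarith
  -- main inequality
  have Hmain : lam * (l1Delta bh - l1Delta β) ≤ k * lam * (E₁ + E₂ + E₃) := by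
    have := le_trans key htot
    rw [hsumsplit] at this
    linarith [this]
  have hE1 : 0 ≤ E₁ := Finset.sum_nonneg fun j _ => abs_nonneg _
  have hE2 : 0 ≤ E₂ := Finset.sum_nonneg fun j _ => abs_nonneg _
  have hE3 : 0 ≤ E₃ := Finset.sum_nonneg fun j _ => abs_nonneg _
  have h1' : E₃ - E₂ ≤ k * (E₁ + E₂ + E₃) := by
    have H1 : lam * (E₃ - E₂) ≤ lam * (k * (E₁ + E₂ + E₃)) :=
      calc lam * (E₃ - E₂) ≤ lam * (l1Delta bh - l1Delta β) :=
            mul_le_mul_of_nonneg_left hb1 hlam.le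
        _ ≤ k * lam * (E₁ + E₂ + E₃) := Hmain
        _ = lam * (k * (E₁ + E₂ + E₃)) := by ring
    exact le_of_mul_le_mul_left H1 hlam
  have h2' : E₂ + E₃ - 2 * (s:ℝ) * δ₀ ≤ k * (E₁ + E₂ + E₃) := by
    have H2 : lam * (E₂ + E₃ - 2 * (s:ℝ) * δ₀) ≤ lam * (k * (E₁ + E₂ + E₃)) :=
      calc lam * (E₂ + E₃ - 2 * (s:ℝ) * δ₀) ≤ lam * (l1Delta bh - l1Delta β) :=
            mul_le_mul_of_nonneg_left hb2 hlam.le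
        _ ≤ k * lam * (E₁ + E₂ + E₃) := Hmain
        _ = lam * (k * (E₁ + E₂ + E₃)) := by ring
    exact le_of_mul_le_mul_left H2 hlam
  have h1k : (0:ℝ) < 1 - k := by linarith
  clear_value E₁ E₂ E₃
  clear hswap hc0 hcj key htot Hmain hsumsplit hb1 hb2 hLbh hLβ hSβ hsplit3 hfilter01
    hbd3 hbd2 hres hres2 hbh_eq heapp hklamnn hmin hΔ hs hf hfc h1 h2 h3
  clear hE1def hE2def hE3def hBdef hudef hedef hbhdef hβdef hxs
  clear u e bh β B xs
  have gA : E₃ ≤ (1 + k) / (1 - k) * E₂ + k / (1 - k) * E₁ := by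
    rw [div_mul_eq_mul_div, div_mul_eq_mul_div, ← add_div, le_div_iff₀ h1k]
    nlinarith [h1']
  have gB : E₃ ≤ 2 * (s:ℝ) * δ₀ / (1 - k) + k / (1 - k) * E₁ := by
    rw [div_mul_eq_mul_div, ← add_div, le_div_iff₀ h1k]
    nlinarith [h2', mul_nonneg h1k.le hE2]
  show E₃ ≤ min ((1 + k) / (1 - k) * E₂) (2 * (s:ℝ) * δ₀ / (1 - k)) + k / (1 - k) * E₁
  rcases le_total ((1 + k) / (1 - k) * E₂) (2 * (s:ℝ) * δ₀ / (1 - k)) with h | h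
  · rw [min_eq_left h]; exact gA
  · rw [min_eq_right h]; exact gB
end

section
/- (Fano's inequality.) Let P₁,…,P_N (N ≥ 2) be probability measures on a measurable space (Ω, ℱ), and let Z : Ω → {1,…,N} be any measurable map. Then (1/N)·Σ_{i=1}^N P_i(Z ≠ i) ≥ 1 − ((1/N²)·Σ_{i=1}^N Σ_{j=1}^N KL(P_i ‖ P_j) + log 2)/log N, where KL(P ‖ Q) denotes the Kullback–Leibler divergence of P from Q. -/
open MeasureTheory Finset ENNReal

open Classical in
/-- Kullback–Leibler divergence: `KL(P‖Q) = ∫ log(dP/dQ) dP` when `P ≪ Q` (and the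
integrand is integrable), and `+∞` otherwise. -/
noncomputable def klDiv {Ω : Type*} [MeasurableSpace Ω] (P Q : Measure Ω) : ℝ≥0∞ :=
  if P ≪ Q ∧ Integrable (fun ω => Real.log (P.rnDeriv Q ω).toReal) P
  then ENNReal.ofReal (∫ ω, Real.log (P.rnDeriv Q ω).toReal ∂P)
  else ∞

lemma log_sum_ineq {ι : Type*} (t : Finset ι) (u v : ι → ℝ) (hu : ∀ x ∈ t, 0 ≤ u x)
    (hv : ∀ x ∈ t, 0 ≤ v x) (himp : ∀ x ∈ t, v x = 0 → u x = 0) :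
    (∑ x ∈ t, u x) * Real.log ((∑ x ∈ t, u x) / (∑ x ∈ t, v x)) ≤
      ∑ x ∈ t, u x * Real.log (u x / v x) := by
  classical
  -- reduce to the subset where v > 0
  set t' := t.filter (fun x => 0 < v x) with ht'
  have hvsum : ∑ x ∈ t, v x = ∑ x ∈ t', v x := by
    rw [ht', Finset.sum_filter]
    refine Finset.sum_congr rfl fun x hx => ?_
    rcases (hv x hx).lt_or_eq with h | h
    · simp [h]
    · simp [← h]
  have husum : ∑ x ∈ t, u x = ∑ x ∈ t', u x := by
    rw [ht', Finset.sum_filter]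
    refine Finset.sum_congr rfl fun x hx => ?_
    rcases (hv x hx).lt_or_eq with h | h
    · simp [h]
    · simp [himp x hx h.symm]
  have hrhs : ∑ x ∈ t, u x * Real.log (u x / v x) = ∑ x ∈ t', u x * Real.log (u x / v x) := by
    rw [ht', Finset.sum_filter]
    refine Finset.sum_congr rfl fun x hx => ?_
    rcases (hv x hx).lt_or_eq with h | h
    · simp [h]
    · simp [himp x hx h.symm]
  rw [hvsum, husum, hrhs]
  have hv' : ∀ x ∈ t', 0 < v x := fun x hx => (Finset.mem_filter.1 hx).2
  have hu' : ∀ x ∈ t', 0 ≤ u x := fun x hx => hu x (Finset.mem_filter.1 hx).1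
  set U := ∑ x ∈ t', u x with hU
  set V := ∑ x ∈ t', v x with hV
  rcases eq_or_lt_of_le (Finset.sum_nonneg hu' : 0 ≤ U) with h0 | hUpos
  · have : ∀ x ∈ t', u x = 0 := by
      intro x hx
      exact (Finset.sum_eq_zero_iff_of_nonneg hu').1 h0.symm x hx
    rw [hU, ← h0]
    simp only [zero_mul]
    rw [Finset.sum_congr rfl (fun x hx => by rw [this x hx, zero_mul])]
    simp
  · have hVpos : 0 < V := by
      have hne : t'.Nonempty := by
        by_contra h
        rw [Finset.not_nonempty_iff_eq_empty] at h
        simp only [h, Finset.sum_empty] at hUpos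
        exact lt_irrefl 0 hUpos
      exact Finset.sum_pos (fun x hx => hv' x hx) hne
    have jensen := Real.convexOn_mul_log.map_sum_le (t := t') (w := fun x => v x / V)
      (p := fun x => u x / v x) (fun x hx => div_nonneg (hv' x hx).le hVpos.le)
      (by rw [← Finset.sum_div]; field_simp; exact hV.symm)
      (fun x hx => div_nonneg (hu' x hx) (hv' x hx).le)
    have hpt : ∑ x ∈ t', (v x / V) • (u x / v x) = U / V := by
      rw [hU, Finset.sum_div]
      refine Finset.sum_congr rfl fun x hx => ?_
      have := (hv' x hx).ne'
      rw [smul_eq_mul, div_mul_div_comm, mul_comm (v x) (u x), mul_div_mul_right _ _ this]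
    rw [hpt] at jensen
    have : U / V * Real.log (U / V) ≤ (1 / V) * ∑ x ∈ t', u x * Real.log (u x / v x) := by
      refine jensen.trans_eq ?_
      rw [Finset.mul_sum]
      refine Finset.sum_congr rfl fun x hx => ?_
      have := (hv' x hx).ne'
      simp only [smul_eq_mul]
      field_simp
    calc U * Real.log (U / V) = V * (U / V * Real.log (U / V)) := by field_simp
      _ ≤ V * ((1 / V) * ∑ x ∈ t', u x * Real.log (u x / v x)) := by
          exact mul_le_mul_of_nonneg_left this hVpos.le
      _ = ∑ x ∈ t', u x * Real.log (u x / v x) := by field_simp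

lemma entropy_ge (p : ℝ) (h0 : 0 ≤ p) (h1 : p ≤ 1) :
    -Real.log 2 ≤ p * Real.log p + (1 - p) * Real.log (1 - p) := by
  rcases eq_or_lt_of_le h0 with h | hp0
  · rw [← h]
    simp only [zero_mul, sub_zero, one_mul, Real.log_one, zero_add, add_zero]
    nlinarith [Real.log_pos (by norm_num : (1:ℝ) < 2)]
  rcases eq_or_lt_of_le h1 with h | hp1
  · rw [h]
    simp only [one_mul, sub_self, zero_mul, add_zero, Real.log_one, mul_zero]
    nlinarith [Real.log_pos (by norm_num : (1:ℝ) < 2)]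
  have hq0 : 0 < 1 - p := by linarith
  have h1' : Real.log (1 / (2 * p)) ≤ 1 / (2 * p) - 1 :=
    Real.log_le_sub_one_of_pos (by positivity)
  have h2' : Real.log (1 / (2 * (1 - p))) ≤ 1 / (2 * (1 - p)) - 1 :=
    Real.log_le_sub_one_of_pos (by positivity)
  have e1 : Real.log (1 / (2 * p)) = -(Real.log 2 + Real.log p) := by
    rw [one_div, Real.log_inv, Real.log_mul (by norm_num) hp0.ne']
  have e2 : Real.log (1 / (2 * (1 - p))) = -(Real.log 2 + Real.log (1 - p)) := by
    rw [one_div, Real.log_inv, Real.log_mul (by norm_num) hq0.ne']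
  rw [e1] at h1'; rw [e2] at h2'
  have b1 : p * (-(Real.log 2 + Real.log p)) ≤ p * (1 / (2 * p) - 1) :=
    mul_le_mul_of_nonneg_left h1' h0
  have b2 : (1 - p) * (-(Real.log 2 + Real.log (1 - p))) ≤ (1 - p) * (1 / (2 * (1 - p)) - 1) :=
    mul_le_mul_of_nonneg_left h2' hq0.le
  have c1 : p * (1 / (2 * p) - 1) = 1 / 2 - p := by field_simp
  have c2 : (1 - p) * (1 / (2 * (1 - p)) - 1) = 1 / 2 - (1 - p) := by field_simp
  nlinarith [b1, b2]

lemma helperB (N : ℝ) (hN : 2 ≤ N) (p : ℝ) (h0 : 0 ≤ p) (h1 : p ≤ 1) :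
    p * Real.log N - Real.log 2 ≤
      p * Real.log (N * p) + (1 - p) * Real.log (N * (1 - p) / (N - 1)) := by
  have hNpos : (0:ℝ) < N := by linarith
  have hN1 : (0:ℝ) < N - 1 := by linarith
  have hlog2 : (0:ℝ) < Real.log 2 := Real.log_pos (by norm_num)
  rcases eq_or_lt_of_le h0 with h | hp0
  · rw [← h]
    simp only [zero_mul, sub_zero, zero_sub, one_mul, mul_one]
    have : (1:ℝ) ≤ N / (N - 1) := by rw [le_div_iff₀ hN1]; linarith
    have := Real.log_nonneg this
    linarith
  rcases eq_or_lt_of_le h1 with h | hp1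
  · rw [h]
    simp only [mul_one, sub_self, zero_mul, add_zero, one_mul]
    linarith
  have hq0 : 0 < 1 - p := by linarith
  have e1 : Real.log (N * p) = Real.log N + Real.log p :=
    Real.log_mul hNpos.ne' hp0.ne'
  have e2 : Real.log (N * (1 - p) / (N - 1)) =
      Real.log N + Real.log (1 - p) - Real.log (N - 1) := by
    rw [Real.log_div (by positivity) hN1.ne', Real.log_mul hNpos.ne' hq0.ne']
  have hmono : Real.log (N - 1) ≤ Real.log N := Real.log_le_log (by linarith) (by linarith)
  have hent := entropy_ge p h0 h1
  rw [e1, e2]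
  nlinarith [hent, mul_le_mul_of_nonneg_left hmono hq0.le]

lemma fano_core (N : ℕ) (hN : 2 ≤ N) (a : Fin N → Fin N → ℝ)
    (ha0 : ∀ i k, 0 ≤ a i k) (ha1 : ∀ i, ∑ k, a i k = 1)
    (hsupp : ∀ i j k, a j k = 0 → a i k = 0) :
    (∑ i, a i i) * Real.log N - N * Real.log 2 ≤
      (1 / N) * ∑ i, ∑ j, ∑ k, a i k * Real.log (a i k / a j k) := by
  classical
  set n : ℝ := (N : ℝ) with hn
  have hn2 : (2:ℝ) ≤ n := by rw [hn]; exact_mod_cast hN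
  have hnpos : (0:ℝ) < n := by linarith
  set s : Fin N → ℝ := fun k => (∑ i, a i k) / n with hs
  have hs0 : ∀ k, 0 ≤ s k := fun k =>
    div_nonneg (Finset.sum_nonneg fun i _ => ha0 i k) hnpos.le
  have hssum : ∑ k, s k = 1 := by
    rw [hs, ← Finset.sum_div, Finset.sum_comm]
    rw [Finset.sum_congr rfl fun i _ => ha1 i]
    simp [hn]
    omega
  have hsupp' : ∀ i k, s k = 0 → a i k = 0 := by
    intro i k hk
    have : ∑ j, a j k = 0 := by
      have := hk
      rw [hs] at this
      field_simp at this
      simpa using this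
    exact (Finset.sum_eq_zero_iff_of_nonneg (fun j _ => ha0 j k)).1 this i (Finset.mem_univ i)
  have hspos : ∀ i k, a i k ≠ 0 → 0 < s k := by
    intro i k h
    rcases (hs0 k).lt_or_eq with h' | h'
    · exact h'
    · exact absurd (hsupp' i k h'.symm) h
  have hapos : ∀ i j k, a i k ≠ 0 → 0 < a j k := by
    intro i j k h
    rcases (ha0 j k).lt_or_eq with h' | h'
    · exact h'
    · exact absurd (hsupp i j k h'.symm) h
  -- Step (i): convexity in the second argument
  have claim1 : ∀ i, ∑ k, a i k * Real.log (a i k / s k) ≤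
      (1 / n) * ∑ j, ∑ k, a i k * Real.log (a i k / a j k) := by
    intro i
    rw [Finset.sum_comm, Finset.mul_sum]
    refine Finset.sum_le_sum fun k _ => ?_
    rcases eq_or_ne (a i k) 0 with h | h
    · simp [h]
    · have haik : 0 < a i k := (ha0 i k).lt_of_ne' h
      have hsk : 0 < s k := hspos i k h
      have jens : ∑ j, (1 / n) • Real.log (a j k) ≤ Real.log (s k) := by
        have := (strictConcaveOn_log_Ioi.concaveOn).le_map_sum
          (t := (Finset.univ : Finset (Fin N))) (w := fun _ => 1 / n)
          (p := fun j => a j k)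
          (fun _ _ => by positivity)
          (by simp [Finset.card_univ]; field_simp; exact hn.symm)
          (fun j _ => hapos i j k h)
        refine this.trans_eq ?_
        congr 1
        rw [hs]
        simp only [smul_eq_mul]
        rw [← Finset.mul_sum, one_div, inv_mul_eq_div]
      have key : Real.log (a i k / s k) ≤ (1 / n) * ∑ j, Real.log (a i k / a j k) := by
        have expand : ∑ j, Real.log (a i k / a j k)
            = n * Real.log (a i k) - ∑ j, Real.log (a j k) := by
          rw [Finset.sum_congr rfl fun j _ =>
            Real.log_div haik.ne' (hapos i j k h).ne', Finset.sum_sub_distrib]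
          simp [Finset.card_univ, hn]
        rw [expand, Real.log_div haik.ne' hsk.ne']
        have : ∑ j, (1 / n) * Real.log (a j k) ≤ Real.log (s k) := by
          simpa using jens
        rw [← Finset.mul_sum] at this
        have hrw : (1 / n) * (n * Real.log (a i k) - ∑ j, Real.log (a j k))
            = Real.log (a i k) - (1 / n) * ∑ j, Real.log (a j k) := by
          field_simp
        rw [hrw]
        linarith
      calc a i k * Real.log (a i k / s k)
          ≤ a i k * ((1 / n) * ∑ j, Real.log (a i k / a j k)) :=
            mul_le_mul_of_nonneg_left key haik.le
        _ = (1 / n) * ∑ j, a i k * Real.log (a i k / a j k) := by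
            simp only [Finset.mul_sum]
            refine Finset.sum_congr rfl fun j _ => ?_
            ring
  -- Step (ii): finite Fano for the mixture
  set g : Fin N → Fin N → ℝ := fun i k => a i k * Real.log (a i k / s k) with hg
  set Pd : ℝ := ∑ i, a i i with hPd
  have hPd0 : 0 ≤ Pd := Finset.sum_nonneg fun i _ => ha0 i i
  have hPd1 : Pd ≤ n := by
    rw [hPd, hn]
    calc ∑ i, a i i ≤ ∑ i : Fin N, (1:ℝ) := by
          refine Finset.sum_le_sum fun i _ => ?_
          rw [← ha1 i]
          exact Finset.single_le_sum (fun k _ => ha0 i k) (Finset.mem_univ i)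
      _ = (N:ℝ) := by simp
  -- diagonal bound
  have hD : Pd * Real.log Pd ≤ ∑ i, g i i := by
    have := log_sum_ineq Finset.univ (fun i => a i i) (fun i => s i)
      (fun i _ => ha0 i i) (fun i _ => hs0 i) (fun i _ h => hsupp' i i h)
    rw [hssum, div_one] at this
    exact this
  -- off-diagonal bound
  set t : Finset (Fin N × Fin N) := Finset.univ.filter (fun x => x.1 ≠ x.2) with ht
  have hdiag_u : ∑ x ∈ Finset.univ.filter (fun x : Fin N × Fin N => ¬ x.1 ≠ x.2),
      a x.1 x.2 = Pd := by
    rw [Finset.sum_filter, Fintype.sum_prod_type]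
    simp only [not_ne_iff]
    rw [hPd]
    exact Finset.sum_congr rfl fun i _ => Finset.sum_ite_eq Finset.univ i (a i) |>.trans (by simp)
  have hdiag_v : ∑ x ∈ Finset.univ.filter (fun x : Fin N × Fin N => ¬ x.1 ≠ x.2),
      s x.2 = 1 := by
    rw [Finset.sum_filter, Fintype.sum_prod_type]
    simp only [not_ne_iff]
    rw [← hssum]
    exact Finset.sum_congr rfl fun i _ => Finset.sum_ite_eq Finset.univ i s |>.trans (by simp)
  have hdiag_g : ∑ x ∈ Finset.univ.filter (fun x : Fin N × Fin N => ¬ x.1 ≠ x.2),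
      g x.1 x.2 = ∑ i, g i i := by
    rw [Finset.sum_filter, Fintype.sum_prod_type]
    simp only [not_ne_iff]
    exact Finset.sum_congr rfl fun i _ =>
      Finset.sum_ite_eq Finset.univ i (g i) |>.trans (by simp)
  have htot_u : ∑ x : Fin N × Fin N, a x.1 x.2 = n := by
    rw [Fintype.sum_prod_type]
    rw [Finset.sum_congr rfl fun i _ => ha1 i]
    simp [hn]
  have htot_v : ∑ x : Fin N × Fin N, s x.2 = n := by
    rw [Fintype.sum_prod_type]
    rw [Finset.sum_congr rfl fun _ _ => hssum]
    simp [hn]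
  have hU : ∑ x ∈ t, a x.1 x.2 = n - Pd := by
    have := Finset.sum_filter_add_sum_filter_not Finset.univ
      (fun x : Fin N × Fin N => x.1 ≠ x.2) (fun x => a x.1 x.2)
    rw [hdiag_u, htot_u] at this
    rw [ht]; linarith
  have hV : ∑ x ∈ t, s x.2 = n - 1 := by
    have := Finset.sum_filter_add_sum_filter_not Finset.univ
      (fun x : Fin N × Fin N => x.1 ≠ x.2) (fun x => s x.2)
    rw [hdiag_v, htot_v] at this
    rw [ht]; linarith
  have hO : (n - Pd) * Real.log ((n - Pd) / (n - 1)) ≤ ∑ x ∈ t, g x.1 x.2 := by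
    have := log_sum_ineq t (fun x => a x.1 x.2) (fun x => s x.2)
      (fun x _ => ha0 x.1 x.2) (fun x _ => hs0 x.2) (fun x _ h => hsupp' x.1 x.2 h)
    rw [hU, hV] at this
    exact this
  have hsplit : ∑ i, ∑ k, g i k = ∑ i, g i i + ∑ x ∈ t, g x.1 x.2 := by
    have := Finset.sum_filter_add_sum_filter_not Finset.univ
      (fun x : Fin N × Fin N => x.1 ≠ x.2) (fun x => g x.1 x.2)
    rw [hdiag_g] at this
    rw [Fintype.sum_prod_type] at this
    rw [ht]
    linarith
  -- combine with helperB
  have hBB : Pd * Real.log n - n * Real.log 2 ≤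
      Pd * Real.log Pd + (n - Pd) * Real.log ((n - Pd) / (n - 1)) := by
    have h := helperB n hn2 (Pd / n) (by positivity) (by rw [div_le_one hnpos]; exact hPd1)
    have e1 : n * (Pd / n) = Pd := by field_simp
    have e2 : n * (1 - Pd / n) = n - Pd := by field_simp
    rw [e1, e2] at h
    have h' := mul_le_mul_of_nonneg_left h hnpos.le
    have e3 : n * (Pd / n * Real.log n - Real.log 2) = Pd * Real.log n - n * Real.log 2 := by
      field_simp
    have e4 : n * (Pd / n * Real.log Pd + (1 - Pd / n) * Real.log ((n - Pd) / (n - 1)))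
        = Pd * Real.log Pd + (n - Pd) * Real.log ((n - Pd) / (n - 1)) := by
      field_simp
    rw [e3, e4] at h'
    exact h'
  -- put everything together
  have hsum1 : ∑ i, ∑ k, g i k ≤ (1 / n) * ∑ i, ∑ j, ∑ k, a i k * Real.log (a i k / a j k) := by
    rw [Finset.mul_sum]
    exact Finset.sum_le_sum fun i _ => claim1 i
  calc Pd * Real.log (N:ℝ) - (N:ℝ) * Real.log 2
      = Pd * Real.log n - n * Real.log 2 := by rw [hn]
    _ ≤ Pd * Real.log Pd + (n - Pd) * Real.log ((n - Pd) / (n - 1)) := hBB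
    _ ≤ ∑ i, g i i + ∑ x ∈ t, g x.1 x.2 := add_le_add hD hO
    _ = ∑ i, ∑ k, g i k := hsplit.symm
    _ ≤ (1 / n) * ∑ i, ∑ j, ∑ k, a i k * Real.log (a i k / a j k) := hsum1
    _ = (1 / (N:ℝ)) * ∑ i, ∑ j, ∑ k, a i k * Real.log (a i k / a j k) := by rw [hn]

lemma setIntegral_log_rnDeriv_ge {Ω : Type*} [MeasurableSpace Ω] (P Q : Measure Ω)
    [IsProbabilityMeasure P] [IsProbabilityMeasure Q] (hAC : P ≪ Q)
    (hInt : Integrable (fun ω => Real.log (P.rnDeriv Q ω).toReal) P)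
    {A : Set Ω} (hA : MeasurableSet A) :
    (P A).toReal * Real.log ((P A).toReal / (Q A).toReal) ≤
      ∫ ω in A, Real.log (P.rnDeriv Q ω).toReal ∂P := by
  set g : Ω → ℝ := fun ω => (P.rnDeriv Q ω).toReal with hg
  rcases eq_or_ne (Q A) 0 with hQA | hQA
  · have hPA : P A = 0 := hAC hQA
    rw [hPA, show P.restrict A = 0 from Measure.restrict_eq_zero.2 hPA, integral_zero_measure]
    simp
  rcases eq_or_ne (P A) 0 with hPA | hPA
  · rw [hPA, show P.restrict A = 0 from Measure.restrict_eq_zero.2 hPA, integral_zero_measure]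
    simp
  -- nondegenerate case: Jensen's inequality for x ↦ x log x
  have hglogg : Integrable (fun ω => g ω * Real.log (g ω)) Q := by
    have := (MeasureTheory.integrable_rnDeriv_smul_iff (f := fun ω => Real.log (g ω)) hAC).2 hInt
    simpa [smul_eq_mul] using this
  have hchg : ∫ ω in A, g ω * Real.log (g ω) ∂Q = ∫ ω in A, Real.log (g ω) ∂P := by
    have h1 := MeasureTheory.integral_rnDeriv_smul (f := A.indicator (fun ω => Real.log (g ω))) hAC
    have h2 : (fun x => (P.rnDeriv Q x).toReal • A.indicator (fun ω => Real.log (g ω)) x)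
        = A.indicator (fun ω => g ω * Real.log (g ω)) := by
      ext x
      by_cases hx : x ∈ A <;> simp [Set.indicator_of_mem, Set.indicator_of_notMem, hx, hg]
    rw [h2, integral_indicator hA, integral_indicator hA] at h1
    exact h1
  set μ := Q.restrict A with hμ
  haveI : IsFiniteMeasure μ := inferInstance
  haveI : NeZero μ := ⟨by rwa [hμ, ne_eq, Measure.restrict_eq_zero]⟩
  have hgint : Integrable g μ := Measure.integrable_toReal_rnDeriv.restrict
  have hφint : Integrable ((fun x => x * Real.log x) ∘ g) μ := hglogg.restrict
  have jensen := Real.convexOn_mul_log.map_average_le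
    (Real.continuous_mul_log.continuousOn) isClosed_Ici
    (Filter.Eventually.of_forall fun x => (ENNReal.toReal_nonneg : (0:ℝ) ≤ g x))
    hgint hφint
  have havg1 : ⨍ x, g x ∂μ = (P A).toReal / (Q A).toReal := by
    rw [average_eq, hμ, measureReal_restrict_apply_univ, measureReal_def,
      Measure.setIntegral_toReal_rnDeriv hAC A]
    rw [smul_eq_mul, div_eq_inv_mul, measureReal_def]
  have havg2 : ⨍ x, g x * Real.log (g x) ∂μ
      = (Q A).toReal⁻¹ * ∫ ω in A, Real.log (g ω) ∂P := by
    rw [average_eq, hμ, measureReal_restrict_apply_univ, measureReal_def, smul_eq_mul, hchg]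
  rw [havg1] at jensen
  have h3 : ⨍ x, (fun x => x * Real.log x) (g x) ∂μ
      = (Q A).toReal⁻¹ * ∫ ω in A, Real.log (g ω) ∂P := havg2
  rw [h3] at jensen
  have hq : 0 < (Q A).toReal :=
    ENNReal.toReal_pos hQA (measure_ne_top Q A)
  have := mul_le_mul_of_nonneg_left jensen hq.le
  calc (P A).toReal * Real.log ((P A).toReal / (Q A).toReal)
      = (Q A).toReal * ((P A).toReal / (Q A).toReal *
          Real.log ((P A).toReal / (Q A).toReal)) := by field_simp
    _ ≤ (Q A).toReal * ((Q A).toReal⁻¹ * ∫ ω in A, Real.log (g ω) ∂P) := this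
    _ = ∫ ω in A, Real.log (g ω) ∂P := by field_simp

lemma sum_fiber_le {Ω : Type*} [MeasurableSpace Ω] {N : ℕ} (P Q : Measure Ω)
    [IsProbabilityMeasure P] [IsProbabilityMeasure Q] (hAC : P ≪ Q)
    (hInt : Integrable (fun ω => Real.log (P.rnDeriv Q ω).toReal) P)
    (Z : Ω → Fin N) (hZ : Measurable Z) :
    ∑ k, (P (Z ⁻¹' {k})).toReal *
        Real.log ((P (Z ⁻¹' {k})).toReal / (Q (Z ⁻¹' {k})).toReal)
      ≤ ∫ ω, Real.log (P.rnDeriv Q ω).toReal ∂P := by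
  set L : Ω → ℝ := fun ω => Real.log (P.rnDeriv Q ω).toReal with hL
  have hAm : ∀ k : Fin N, MeasurableSet (Z ⁻¹' {k}) :=
    fun k => hZ (measurableSet_singleton k)
  have hptw : ∀ ω, ∑ k, (Z ⁻¹' {k}).indicator L ω = L ω := by
    intro ω
    rw [Finset.sum_eq_single_of_mem (Z ω) (Finset.mem_univ _)]
    · simp [Set.indicator_of_mem, Set.mem_preimage]
    · intro k _ hk
      apply Set.indicator_of_notMem
      simp only [Set.mem_preimage, Set.mem_singleton_iff]
      exact fun h => hk h.symm
  have hdecomp : ∫ ω, L ω ∂P = ∑ k, ∫ ω in Z ⁻¹' {k}, L ω ∂P := by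
    calc ∫ ω, L ω ∂P = ∫ ω, ∑ k, (Z ⁻¹' {k}).indicator L ω ∂P := by
          exact integral_congr_ae (Filter.Eventually.of_forall fun ω => (hptw ω).symm)
      _ = ∑ k, ∫ ω, (Z ⁻¹' {k}).indicator L ω ∂P :=
          integral_finset_sum _ fun k _ => hInt.indicator (hAm k)
      _ = ∑ k, ∫ ω in Z ⁻¹' {k}, L ω ∂P :=
          Finset.sum_congr rfl fun k _ => integral_indicator (hAm k)
  rw [hdecomp]
  exact Finset.sum_le_sum fun k _ =>
    setIntegral_log_rnDeriv_ge P Q hAC hInt (hAm k)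

/-- **Fano's inequality.** Let `P₁,…,P_N` (`N ≥ 2`) be probability measures
on a measurable space `Ω`, and let `Z : Ω → {1,…,N}` be any measurable map. Then
`(1/N)·Σᵢ Pᵢ(Z ≠ i) ≥ 1 − ((1/N²)·Σᵢⱼ KL(Pᵢ‖Pⱼ) + log 2)/log N`. -/
theorem stmt_12 {Ω : Type*} [MeasurableSpace Ω] (N : ℕ) (hN : 2 ≤ N)
    (P : Fin N → Measure Ω) (hP : ∀ i, IsProbabilityMeasure (P i))
    (Z : Ω → Fin N) (hZ : Measurable Z) :
    1 - (((N : ℝ≥0∞) ^ 2)⁻¹ * (∑ i, ∑ j, klDiv (P i) (P j)) + ENNReal.ofReal (Real.log 2))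
        / ENNReal.ofReal (Real.log N)
      ≤ (N : ℝ≥0∞)⁻¹ * ∑ i, P i {ω | Z ω ≠ i} := by
  classical
  have hNR : (2:ℝ) ≤ (N:ℝ) := by exact_mod_cast hN
  have hNpos : (0:ℝ) < (N:ℝ) := by linarith
  have hlogN : 0 < Real.log N := Real.log_pos (by linarith)
  have hlog2 : (0:ℝ) ≤ Real.log 2 := Real.log_nonneg (by norm_num)
  by_cases hfin : ∀ i j, P i ≪ P j ∧
      Integrable (fun ω => Real.log ((P i).rnDeriv (P j) ω).toReal) (P i)
  swap
  · -- some KL divergence is infinite: left-hand side is 0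
    push_neg at hfin
    obtain ⟨i, j, hij⟩ := hfin
    have hkl : klDiv (P i) (P j) = ∞ := by
      rw [klDiv, if_neg]
      exact fun h => hij h.1 h.2
    have hsum : ∑ i, ∑ j, klDiv (P i) (P j) = ∞ := by
      rw [ENNReal.sum_eq_top]
      exact ⟨i, Finset.mem_univ i, by rw [ENNReal.sum_eq_top]; exact ⟨j, Finset.mem_univ j, hkl⟩⟩
    have hN2 : (((N : ℝ≥0∞) ^ 2)⁻¹ : ℝ≥0∞) ≠ 0 := by
      rw [ne_eq, ENNReal.inv_eq_zero]
      exact ENNReal.pow_ne_top (ENNReal.natCast_ne_top N)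
    rw [hsum, ENNReal.mul_top hN2, top_add, ENNReal.top_div_of_ne_top
      ENNReal.ofReal_ne_top]
    simp
  -- all KL divergences are finite
  haveI := hP
  set a : Fin N → Fin N → ℝ := fun i k => ((P i) (Z ⁻¹' {k})).toReal with ha
  set c : Fin N → Fin N → ℝ :=
    fun i j => ∫ ω, Real.log ((P i).rnDeriv (P j) ω).toReal ∂(P i) with hc
  have hkl : ∀ i j, klDiv (P i) (P j) = ENNReal.ofReal (c i j) := by
    intro i j
    rw [klDiv, if_pos (hfin i j)]
  have hc0 : ∀ i j, 0 ≤ c i j := by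
    intro i j
    have h := setIntegral_log_rnDeriv_ge (P i) (P j) (hfin i j).1 (hfin i j).2
      MeasurableSet.univ
    rw [setIntegral_univ] at h
    simpa using h
  have hAm : ∀ k : Fin N, MeasurableSet (Z ⁻¹' {k}) :=
    fun k => hZ (measurableSet_singleton k)
  have ha0 : ∀ i k, 0 ≤ a i k := fun i k => ENNReal.toReal_nonneg
  have ha1 : ∀ i, ∑ k, a i k = 1 := by
    intro i
    have hdisj : Pairwise (Function.onFun Disjoint fun k : Fin N => Z ⁻¹' {k}) := by
      intro k l hkl
      exact Set.disjoint_left.2 fun ω h1 h2 => hkl (by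
        simp only [Set.mem_preimage, Set.mem_singleton_iff] at h1 h2
        rw [← h1, ← h2])
    have hunion : (⋃ k : Fin N, Z ⁻¹' {k}) = Set.univ := by
      ext ω; simp
    have := measure_iUnion (μ := P i) hdisj hAm
    rw [hunion, measure_univ, tsum_fintype] at this
    rw [ha]
    rw [← ENNReal.toReal_sum (fun k _ => measure_ne_top _ _), ← this]
    simp
  have hsupp : ∀ i j k, a j k = 0 → a i k = 0 := by
    intro i j k h
    have h1 : (P j) (Z ⁻¹' {k}) = 0 := by
      rw [ha, ENNReal.toReal_eq_zero_iff] at h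
      exact h.resolve_right (measure_ne_top _ _)
    rw [ha, ENNReal.toReal_eq_zero_iff]
    exact Or.inl ((hfin i j).1 h1)
  -- the real-valued chain of inequalities
  have hfan := fano_core N hN a ha0 ha1 hsupp
  have hlink : ∀ i j, ∑ k, a i k * Real.log (a i k / a j k) ≤ c i j := fun i j =>
    sum_fiber_le (P i) (P j) (hfin i j).1 (hfin i j).2 Z hZ
  set S : ℝ := ∑ i, a i i with hS
  set kk : ℝ := ∑ i, ∑ j, c i j with hkk
  have hkk0 : 0 ≤ kk :=
    Finset.sum_nonneg fun i _ => Finset.sum_nonneg fun j _ => hc0 i j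
  have hchain : S * Real.log N - N * Real.log 2 ≤ (1 / N) * kk := by
    refine hfan.trans ?_
    refine mul_le_mul_of_nonneg_left ?_ (by positivity)
    exact Finset.sum_le_sum fun i _ => Finset.sum_le_sum fun j _ => hlink i j
  have hcompl : ∀ i, (P i {ω | Z ω ≠ i}).toReal = 1 - a i i := by
    intro i
    have hset : {ω | Z ω ≠ i} = (Z ⁻¹' {i})ᶜ := by
      ext ω; simp
    rw [hset, measure_compl (hAm i) (measure_ne_top _ _), measure_univ,
      ENNReal.toReal_sub_of_le prob_le_one ENNReal.one_ne_top, ENNReal.toReal_one, ha]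
  have key : 1 ≤ (N:ℝ)⁻¹ * (∑ i, (P i {ω | Z ω ≠ i}).toReal)
      + (((N:ℝ)^2)⁻¹ * kk + Real.log 2) / Real.log N := by
    have hsum : ∑ i, (P i {ω | Z ω ≠ i}).toReal = (N:ℝ) - S := by
      rw [Finset.sum_congr rfl fun i _ => hcompl i, Finset.sum_sub_distrib, hS]
      simp
    rw [hsum]
    have e1 : (N:ℝ)⁻¹ * ((N:ℝ) - S) = 1 - S / N := by field_simp
    rw [e1]
    have key2 : S / N * Real.log N ≤ ((N:ℝ)^2)⁻¹ * kk + Real.log 2 := by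
      rw [div_mul_eq_mul_div, div_le_iff₀ hNpos]
      have e2 : (((N:ℝ)^2)⁻¹ * kk + Real.log 2) * N = (1/N) * kk + N * Real.log 2 := by
        field_simp
      rw [e2]
      linarith
    have key3 : S / N ≤ (((N:ℝ)^2)⁻¹ * kk + Real.log 2) / Real.log N := by
      rw [le_div_iff₀ hlogN]
      exact key2
    linarith
  -- converting to `ℝ≥0∞`
  have hEr : (((N : ℝ≥0∞) ^ 2)⁻¹ * (∑ i, ∑ j, klDiv (P i) (P j))
        + ENNReal.ofReal (Real.log 2)) / ENNReal.ofReal (Real.log N)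
      = ENNReal.ofReal ((((N:ℝ)^2)⁻¹ * kk + Real.log 2) / Real.log N) := by
    have h1 : ∑ i, ∑ j, klDiv (P i) (P j) = ENNReal.ofReal kk := by
      rw [hkk, ENNReal.ofReal_sum_of_nonneg
        (fun i _ => Finset.sum_nonneg fun j _ => hc0 i j)]
      refine Finset.sum_congr rfl fun i _ => ?_
      rw [ENNReal.ofReal_sum_of_nonneg (fun j _ => hc0 i j)]
      exact Finset.sum_congr rfl fun j _ => hkl i j
    have h2 : ((N : ℝ≥0∞) ^ 2)⁻¹ = ENNReal.ofReal (((N:ℝ)^2)⁻¹) := by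
      rw [ENNReal.ofReal_inv_of_pos (by positivity), ENNReal.ofReal_pow hNpos.le,
        ENNReal.ofReal_natCast]
    rw [h1, h2, ← ENNReal.ofReal_mul (by positivity),
      ← ENNReal.ofReal_add (mul_nonneg (by positivity) hkk0) hlog2,
      ← ENNReal.ofReal_div_of_pos hlogN]
  have hRr : (N : ℝ≥0∞)⁻¹ * ∑ i, P i {ω | Z ω ≠ i}
      = ENNReal.ofReal ((N:ℝ)⁻¹ * ∑ i, (P i {ω | Z ω ≠ i}).toReal) := by
    rw [ENNReal.ofReal_mul (by positivity),
      ENNReal.ofReal_sum_of_nonneg (fun i _ => ENNReal.toReal_nonneg),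
      ENNReal.ofReal_inv_of_pos hNpos, ENNReal.ofReal_natCast]
    congr 1
    exact Finset.sum_congr rfl fun i _ => (ENNReal.ofReal_toReal (measure_ne_top _ _)).symm
  rw [hEr, hRr, tsub_le_iff_right,
    ← ENNReal.ofReal_add (by positivity)
      (div_nonneg (add_nonneg (mul_nonneg (by positivity) hkk0) hlog2) hlogN.le),
    ENNReal.one_le_ofReal]
  exact key
end

section
/- Let T ≥ 3, let α₁, α₂ ∈ ℝ with |α₁| < 1, let P_α be the T×T lower-triangular matrix with (P_α)_{ij} = α^{i−j} for i ≥ j and 0 otherwise, and set Σ_k = P_{α_k}·P_{α_k}ᵀ for k = 1, 2. Then for every i with 2 ≤ i ≤ T−1, the diagonal entries satisfy (Σ₂⁻¹Σ₁)_{ii} = −α₁α₂·(2·(1−α₁^{2i−2})/(1−α₁²) + α₁^{2i−2}) + (α₂²+1)·(1−α₁^{2i})/(1−α₁²). Moreover, if |α₁| ≤ δ_s and |α₂| ≤ δ_s for some δ_s ∈ (0,1), then (Σ₂⁻¹Σ₁)_{ii} ≤ (3δ_s² + 1)/(1 − δ_s²) for all 2 ≤ i ≤ T−1. -/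
open Matrix

/-- The T×T lower-triangular Toeplitz matrix `P_α` with `(P_α)_{ij} = α^{i−j}` for `i ≥ j`. -/
noncomputable def Pmat (T : ℕ) (α : ℝ) : Matrix (Fin T) (Fin T) ℝ :=
  Matrix.of fun i j => if (j : ℕ) ≤ (i : ℕ) then α ^ ((i : ℕ) - (j : ℕ)) else 0

/-- `Σ_k = P_{α_k}·P_{α_k}ᵀ`. -/
noncomputable def SigmaMat (T : ℕ) (α : ℝ) : Matrix (Fin T) (Fin T) ℝ :=
  Pmat T α * (Pmat T α)ᵀ

open Finset in
noncomputable def Bmat (T : ℕ) (α : ℝ) : Matrix (Fin T) (Fin T) ℝ :=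
  Matrix.of fun i j => if i = j then 1 else if (i : ℕ) = (j : ℕ) + 1 then -α else 0

lemma B_split (T : ℕ) (α : ℝ) (m k : Fin T) :
    Bmat T α m k = (if m = k then (1:ℝ) else 0) + (if (m:ℕ) = (k:ℕ) + 1 then -α else 0) := by
  unfold Bmat
  simp only [Matrix.of_apply]
  split_ifs with h1 h2 h2
  · exact absurd (Fin.val_eq_of_eq h1 ▸ h2) (by omega)
  · ring
  · ring
  · ring

lemma sum_Bcol (T : ℕ) (α : ℝ) (k : Fin T) (g : Fin T → ℝ) :
    ∑ m, Bmat T α m k * g m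
      = g k + (if h : (k:ℕ)+1 < T then -α * g ⟨(k:ℕ)+1, h⟩ else 0) := by
  simp only [B_split, add_mul, Finset.sum_add_distrib, ite_mul, one_mul, zero_mul]
  congr 1
  · rw [Finset.sum_ite_eq']; simp
  · split_ifs with h
    · rw [Finset.sum_eq_single (⟨(k:ℕ)+1, h⟩ : Fin T)]
      · simp
      · intro m _ hm
        rw [if_neg (by simpa [Fin.ext_iff] using hm)]
      · simp
    · apply Finset.sum_eq_zero
      intro m _
      have : (m:ℕ) < T := m.isLt
      rw [if_neg (by omega)]

lemma sum_Brow (T : ℕ) (α : ℝ) (k : Fin T) (g : Fin T → ℝ) :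
    ∑ m, Bmat T α k m * g m
      = g k + (if h : 0 < (k:ℕ) then -α * g ⟨(k:ℕ)-1, by omega⟩ else 0) := by
  have hsplit : ∀ m : Fin T, Bmat T α k m = (if m = k then (1:ℝ) else 0) +
      (if (m:ℕ) + 1 = (k:ℕ) then -α else 0) := by
    intro m
    unfold Bmat
    simp only [Matrix.of_apply]
    by_cases h1 : k = m
    · subst h1; simp
    · rw [if_neg h1, if_neg (Ne.symm h1)]
      by_cases h2 : (k:ℕ) = (m:ℕ) + 1
      · rw [if_pos h2, if_pos (by omega)]; ring
      · rw [if_neg h2, if_neg (by omega)]; ring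
  simp only [hsplit, add_mul, Finset.sum_add_distrib, ite_mul, one_mul, zero_mul]
  congr 1
  · rw [Finset.sum_ite_eq']; simp
  · split_ifs with h
    · rw [Finset.sum_eq_single (⟨(k:ℕ)-1, by omega⟩ : Fin T)]
      · rw [if_pos (by simp; omega)]
      · intro m _ hm
        rw [if_neg (by simp [Fin.ext_iff] at hm ⊢; omega)]
      · simp
    · apply Finset.sum_eq_zero
      intro m _
      rw [if_neg (by omega)]

lemma PB_eq_one (T : ℕ) (α : ℝ) : Pmat T α * Bmat T α = 1 := by
  ext i j
  rw [Matrix.mul_apply]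
  rw [Finset.sum_congr rfl (fun k _ => mul_comm (Pmat T α i k) (Bmat T α k j))]
  rw [sum_Bcol T α j (fun k => Pmat T α i k)]
  unfold Pmat
  simp only [Matrix.of_apply, Matrix.one_apply]
  split_ifs with h hij hj1 hij2 hij hij2 <;>
    simp_all [Fin.ext_iff] <;> try omega
  · -- j ≤ i, j+1 ≤ i, i ≠ j : α^(i-j) - α * α^(i-j-1) = 0
    rw [show (i:ℕ) - (j:ℕ) = ((i:ℕ) - ((j:ℕ)+1)) + 1 by omega, pow_succ]
    ring

lemma Sigma_inv (T : ℕ) (α : ℝ) :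
    (SigmaMat T α)⁻¹ = (Bmat T α)ᵀ * Bmat T α := by
  apply Matrix.inv_eq_right_inv
  have hPB := PB_eq_one T α
  have hBP : Bmat T α * Pmat T α = 1 := mul_eq_one_comm.mp hPB
  have hPtBt : (Pmat T α)ᵀ * (Bmat T α)ᵀ = 1 := by
    rw [← Matrix.transpose_mul, hBP, Matrix.transpose_one]
  unfold SigmaMat
  calc Pmat T α * (Pmat T α)ᵀ * ((Bmat T α)ᵀ * Bmat T α)
      = Pmat T α * ((Pmat T α)ᵀ * (Bmat T α)ᵀ) * Bmat T α := by
        simp only [Matrix.mul_assoc]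
    _ = 1 := by rw [hPtBt, Matrix.mul_one, hPB]

lemma Sigma_apply (T : ℕ) (α : ℝ) (a b : Fin T) (hba : (b:ℕ) ≤ (a:ℕ)) :
    SigmaMat T α a b = α ^ ((a:ℕ) - (b:ℕ)) * ∑ m ∈ Finset.range ((b:ℕ)+1), (α^2)^m := by
  unfold SigmaMat Pmat
  rw [Matrix.mul_apply]
  simp only [Matrix.transpose_apply, Matrix.of_apply]
  have h1 : ∑ k : Fin T, (if (k:ℕ) ≤ (a:ℕ) then α ^ ((a:ℕ) - (k:ℕ)) else 0) *
      (if (k:ℕ) ≤ (b:ℕ) then α ^ ((b:ℕ) - (k:ℕ)) else 0)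
      = ∑ k ∈ Finset.range T, (if k ≤ (a:ℕ) then α ^ ((a:ℕ) - k) else 0) *
      (if k ≤ (b:ℕ) then α ^ ((b:ℕ) - k) else 0) := by
    exact Fin.sum_univ_eq_sum_range (fun k => (if k ≤ (a:ℕ) then α ^ ((a:ℕ) - k) else 0) *
      (if k ≤ (b:ℕ) then α ^ ((b:ℕ) - k) else 0)) T
  rw [h1]
  rw [← Finset.sum_subset (Finset.range_subset_range.mpr (show (b:ℕ)+1 ≤ T by omega))
      (fun k _ hk => by
        rw [Finset.mem_range, not_lt] at hk
        rw [if_neg (show ¬ k ≤ (b:ℕ) by omega), mul_zero])]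
  rw [Finset.mul_sum]
  rw [← Finset.sum_range_reflect]
  apply Finset.sum_congr rfl
  intro j hj
  rw [Finset.mem_range] at hj
  rw [if_pos (by omega), if_pos (by omega)]
  rw [show (a:ℕ) - ((b:ℕ) + 1 - 1 - j) = ((a:ℕ) - (b:ℕ)) + j by omega,
      show (b:ℕ) - ((b:ℕ) + 1 - 1 - j) = j by omega,
      pow_add, show ((α^2)^j : ℝ) = α^j * α^j by rw [← pow_add, ← pow_mul]; ring_nf]
  ring

lemma Sigma_symm (T : ℕ) (α : ℝ) (a b : Fin T) :
    SigmaMat T α a b = SigmaMat T α b a := by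
  unfold SigmaMat
  rw [Matrix.mul_apply, Matrix.mul_apply]
  exact Finset.sum_congr rfl fun k _ => by simp [Matrix.transpose_apply, mul_comm]

lemma entry_eq (T : ℕ) (α₁ α₂ : ℝ) (hα₁ : |α₁| < 1) (i : ℕ) (hi2 : 2 ≤ i)
    (hiT : i + 1 ≤ T) (h : i - 1 < T) :
    ((SigmaMat T α₂)⁻¹ * SigmaMat T α₁) ⟨i - 1, h⟩ ⟨i - 1, h⟩ =
      -(α₁ * α₂) * (2 * (1 - α₁ ^ (2 * i - 2)) / (1 - α₁ ^ 2) + α₁ ^ (2 * i - 2)) +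
        (α₂ ^ 2 + 1) * (1 - α₁ ^ (2 * i)) / (1 - α₁ ^ 2) := by
  set a : Fin T := ⟨i - 1, h⟩ with ha
  have hav : (a : ℕ) = i - 1 := rfl
  have hlt : (a : ℕ) + 1 < T := by omega
  rw [Sigma_inv, Matrix.mul_assoc, Matrix.mul_apply]
  simp only [Matrix.transpose_apply]
  rw [sum_Bcol T α₂ a fun k => (Bmat T α₂ * SigmaMat T α₁) k a]
  rw [dif_pos hlt]
  have hm : ∀ k : Fin T, (Bmat T α₂ * SigmaMat T α₁) k a
      = SigmaMat T α₁ k a + (if hk : 0 < (k : ℕ) then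
          -α₂ * SigmaMat T α₁ ⟨(k : ℕ) - 1, by omega⟩ a else 0) := fun k => by
    rw [Matrix.mul_apply]
    exact sum_Brow T α₂ k fun m => SigmaMat T α₁ m a
  rw [hm a, hm ⟨(a : ℕ) + 1, hlt⟩]
  rw [dif_pos (show 0 < (a : ℕ) by omega),
      dif_pos (show 0 < ((⟨(a : ℕ) + 1, hlt⟩ : Fin T) : ℕ) by simp)]
  -- entry values
  have e1 : ∀ (x : Fin T), (x : ℕ) = i - 1 →
      SigmaMat T α₁ x a = ∑ m ∈ Finset.range i, (α₁ ^ 2) ^ m := by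
    intro x hx
    rw [Sigma_apply T α₁ x a (by omega), show (x:ℕ) - (a:ℕ) = 0 by omega, pow_zero, one_mul]
    congr 2
    omega
  have e2 : ∀ (x : Fin T), (x : ℕ) = i - 2 →
      SigmaMat T α₁ x a = α₁ * ∑ m ∈ Finset.range (i - 1), (α₁ ^ 2) ^ m := by
    intro x hx
    rw [Sigma_symm, Sigma_apply T α₁ a x (by omega), show (a:ℕ) - (x:ℕ) = 1 by omega, pow_one,
      show (x:ℕ) + 1 = i - 1 by omega]
  have e3 : ∀ (x : Fin T), (x : ℕ) = i →
      SigmaMat T α₁ x a = α₁ * ∑ m ∈ Finset.range i, (α₁ ^ 2) ^ m := by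
    intro x hx
    rw [Sigma_apply T α₁ x a (by omega), show (x:ℕ) - (a:ℕ) = 1 by omega, pow_one,
      show (a:ℕ) + 1 = i by omega]
  rw [e1 a rfl, e2 ⟨(a:ℕ) - 1, by omega⟩ (by simp [hav]; omega),
      e3 ⟨(a:ℕ) + 1, hlt⟩ (by simp [hav]; omega),
      e1 ⟨((⟨(a : ℕ) + 1, hlt⟩ : Fin T) : ℕ) - 1, by omega⟩ (by simp [hav])]
  -- now pure algebra
  have hy1 : α₁ ^ 2 < 1 := by
    have := sq_abs α₁
    nlinarith [abs_nonneg α₁]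
  have hyne : (α₁ ^ 2 : ℝ) ≠ 1 := ne_of_lt hy1
  rw [geom_sum_eq hyne, geom_sum_eq hyne]
  have hp2 : ((α₁ ^ 2) ^ (i - 1) : ℝ) = α₁ ^ (2 * i - 2) := by
    rw [← pow_mul]
    congr 1
    omega
  have hp1 : ((α₁ ^ 2) ^ i : ℝ) = α₁ ^ (2 * i - 2) * α₁ ^ 2 := by
    rw [← hp2, ← pow_succ]
    congr 1
    omega
  have hq : (α₁ ^ (2 * i) : ℝ) = α₁ ^ (2 * i - 2) * α₁ ^ 2 := by
    rw [← pow_add]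
    congr 1
    omega
  rw [hp1, hp2, hq]
  have hne : (1 : ℝ) - α₁ ^ 2 ≠ 0 := by nlinarith
  have hne' : (α₁ ^ 2 : ℝ) - 1 ≠ 0 := by
    intro hc; apply hne; linarith
  field_simp
  ring

lemma bound_core (p q u y d : ℝ) (hpq : -(p * q) ≤ d) (hq2 : q ^ 2 ≤ d)
    (hu0 : 0 ≤ u) (hu1 : u ≤ 1) (hy0 : 0 ≤ y) (hyd : y ≤ d) (hd1 : d < 1) :
    -(p * q) * (2 * (1 - u) / (1 - y) + u) + (q ^ 2 + 1) * (1 - u * y) / (1 - y) ≤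
      (3 * d + 1) / (1 - d) := by
  have hd0 : 0 ≤ d := le_trans hy0 hyd
  have h1d : 0 < 1 - d := by linarith
  have h1y : 0 < 1 - y := by linarith
  have hEeq : -(p * q) * (2 * (1 - u) / (1 - y) + u) + (q ^ 2 + 1) * (1 - u * y) / (1 - y)
      = (-(p * q) * (2 - u - u * y) + (q ^ 2 + 1) * (1 - u * y)) / (1 - y) := by
    field_simp
    ring
  rw [hEeq]
  have huy : 0 ≤ u * y := mul_nonneg hu0 hy0
  have hy1 : y ≤ 1 := by linarith
  have huy1 : u * y ≤ 1 := by nlinarith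
  have h2u : 0 ≤ 2 - u - u * y := by nlinarith
  have hnum : -(p * q) * (2 - u - u * y) + (q ^ 2 + 1) * (1 - u * y) ≤ 3 * d + 1 := by
    have t1 : -(p * q) * (2 - u - u * y) ≤ d * (2 - u - u * y) :=
      mul_le_mul_of_nonneg_right hpq h2u
    have t2 : d * (2 - u - u * y) ≤ 2 * d := by nlinarith
    have t3 : (q ^ 2 + 1) * (1 - u * y) ≤ d + 1 := by nlinarith [sq_nonneg q]
    linarith
  exact div_le_div₀ (by linarith) hnum h1d (by linarith)

lemma bound_lemma (α₁ α₂ δs : ℝ) (hδ0 : 0 < δs) (hδ1 : δs < 1)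
    (h1 : |α₁| ≤ δs) (h2 : |α₂| ≤ δs) (i : ℕ) (hi2 : 2 ≤ i) :
    -(α₁ * α₂) * (2 * (1 - α₁ ^ (2 * i - 2)) / (1 - α₁ ^ 2) + α₁ ^ (2 * i - 2)) +
        (α₂ ^ 2 + 1) * (1 - α₁ ^ (2 * i)) / (1 - α₁ ^ 2) ≤
      (3 * δs ^ 2 + 1) / (1 - δs ^ 2) := by
  have hv : α₁ ^ (2 * i) = α₁ ^ (2 * i - 2) * α₁ ^ 2 := by
    rw [← pow_add]
    congr 1
    omega
  have husq : α₁ ^ (2 * i - 2) = (α₁ ^ (i - 1)) ^ 2 := by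
    rw [← pow_mul]
    congr 1
    omega
  have hd1 : δs ^ 2 < 1 := by nlinarith
  have hyd : α₁ ^ 2 ≤ δs ^ 2 := by nlinarith [sq_abs α₁, abs_nonneg α₁]
  have ha1 : |α₁| ≤ 1 := le_trans h1 hδ1.le
  have hu1 : α₁ ^ (2 * i - 2) ≤ 1 := by
    rw [husq]
    have : |α₁ ^ (i - 1)| ≤ 1 := by
      rw [abs_pow]
      exact pow_le_one₀ (abs_nonneg _) ha1
    nlinarith [sq_abs (α₁ ^ (i - 1)), abs_nonneg (α₁ ^ (i - 1))]
  have habs : |α₁ * α₂| ≤ δs * δs := by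
    rw [abs_mul]
    exact mul_le_mul h1 h2 (abs_nonneg _) hδ0.le
  have hxb : -(α₁ * α₂) ≤ δs ^ 2 := by nlinarith [neg_abs_le (α₁ * α₂)]
  have hb2 : α₂ ^ 2 ≤ δs ^ 2 := by nlinarith [sq_abs α₂, abs_nonneg α₂]
  rw [hv]
  exact bound_core α₁ α₂ _ _ _ hxb hb2 (husq ▸ sq_nonneg _) hu1 (sq_nonneg α₁) hyd hd1

/-- Let `T ≥ 3`, `|α₁| < 1`, and `Σ_k = P_{α_k}P_{α_k}ᵀ`. Then for every
(1-indexed) `i` with `2 ≤ i ≤ T−1`, the diagonal entries satisfy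
`(Σ₂⁻¹Σ₁)_{ii} = −α₁α₂·(2·(1−α₁^{2i−2})/(1−α₁²) + α₁^{2i−2}) + (α₂²+1)·(1−α₁^{2i})/(1−α₁²)`.
Moreover, if `|α₁| ≤ δ_s` and `|α₂| ≤ δ_s` for some `δ_s ∈ (0,1)`, then
`(Σ₂⁻¹Σ₁)_{ii} ≤ (3δ_s² + 1)/(1 − δ_s²)` for all such `i`. -/
theorem stmt_19 (T : ℕ) (hT : 3 ≤ T) (α₁ α₂ : ℝ) (hα₁ : |α₁| < 1) :
    (∀ i : ℕ, (hi2 : 2 ≤ i) → (hiT : i ≤ T - 1) →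
      ((SigmaMat T α₂)⁻¹ * SigmaMat T α₁) ⟨i - 1, by omega⟩ ⟨i - 1, by omega⟩ =
        -(α₁ * α₂) * (2 * (1 - α₁ ^ (2 * i - 2)) / (1 - α₁ ^ 2) + α₁ ^ (2 * i - 2)) +
          (α₂ ^ 2 + 1) * (1 - α₁ ^ (2 * i)) / (1 - α₁ ^ 2)) ∧
    (∀ δs : ℝ, 0 < δs → δs < 1 → |α₁| ≤ δs → |α₂| ≤ δs →
      ∀ i : ℕ, (hi2 : 2 ≤ i) → (hiT : i ≤ T - 1) →
        ((SigmaMat T α₂)⁻¹ * SigmaMat T α₁) ⟨i - 1, by omega⟩ ⟨i - 1, by omega⟩ ≤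
          (3 * δs ^ 2 + 1) / (1 - δs ^ 2)) := by
  constructor
  · intro i hi2 hiT
    exact entry_eq T α₁ α₂ hα₁ i hi2 (by omega) (by omega)
  · intro δs hδ0 hδ1 h1 h2 i hi2 hiT
    rw [entry_eq T α₁ α₂ hα₁ i hi2 (by omega) (by omega)]
    exact bound_lemma α₁ α₂ δs hδ0 hδ1 h1 h2 i hi2
end
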